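/- (Theorem 7, f-state-aware large-α clipping.) Let f : ℝ → ℝ be monotone increasing with f(x) ≥ 0 for x ≥ 0. In the setting of Theorem 1, assume α > 0, d^D(s) > 0 and Dis(π)(s) ≥ 0 for all π ∈ Π and s, set w^π(s) := d_D^π(s)/d^D(s), and for C > 0 define the clipped f-weight (s ↦ min(f(w^π(s)), C)). Let π̄ ∈ Π be a minimizer over Π of INF_{Dis}(π) := ⟨ρ, V^{π*} − V^π⟩ + ⟨d_D^π, u^π + α·Dis(π)⟩. If there exists a state s₀ with d_D^{π̄}(s₀)·Dis(π̄)(s₀) > 0 and f(w^{π̄}(s₀)) < 1, then there exists C > 1 such that min_{π∈Π} ( ⟨ρ, V^{π*} − V^π⟩ + ⟨d_D^π, u^π + α·(min(f∘w^π, C))·Dis(π)⟩ ) ≤ min_{π∈Π} INF_{Dis}(π). -/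

import Mathlib

open Matrix Finset

/-- The activity matrix `Aπ` of a policy `π`: `Aπ s (s', a) = π s a` if `s' = s`, else `0`. -/
def actMat {S A : Type*} [DecidableEq S] (π : S → A → ℝ) : Matrix S (S × A) ℝ :=
  Matrix.of fun s p => if p.1 = s then π s p.2 else 0

/-- The value vector `V^π = (I − γ Aπ P)⁻¹ (Aπ r)`. -/
noncomputable def valVec {S A : Type*} [Fintype S] [Fintype A] [DecidableEq S]
    (γ : ℝ) (P : Matrix (S × A) S ℝ) (r : S × A → ℝ) (π : S → A → ℝ) : S → ℝ :=
  (1 - γ • (actMat π * P))⁻¹.mulVec ((actMat π).mulVec r)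

/-- The discounted occupancy row vector `d^π = ρᵀ (I − γ Aπ P)⁻¹`. -/
noncomputable def occVec {S A : Type*} [Fintype S] [Fintype A] [DecidableEq S]
    (γ : ℝ) (P : Matrix (S × A) S ℝ) (ρ : S → ℝ) (π : S → A → ℝ) : S → ℝ :=
  Matrix.vecMul ρ (1 - γ • (actMat π * P))⁻¹

/-- The normalized discounted occupancy `(1 − γ)·ρᵀ (I − γ Aπ P)⁻¹`. -/
noncomputable def noccVec {S A : Type*} [Fintype S] [Fintype A] [DecidableEq S]
    (γ : ℝ) (P : Matrix (S × A) S ℝ) (ρ : S → ℝ) (π : S → A → ℝ) : S → ℝ :=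
  fun s => (1 - γ) * Matrix.vecMul ρ (1 - γ • (actMat π * P))⁻¹ s


lemma pow_entries_nonneg {S : Type*} [Fintype S] [DecidableEq S]
    (B : Matrix S S ℝ) (hB0 : ∀ i j, 0 ≤ B i j) :
    ∀ n : ℕ, ∀ i j, 0 ≤ (B ^ n) i j := by
  intro n
  induction n with
  | zero => intro i j; simp [Matrix.one_apply]; positivity
  | succ n ih =>
    intro i j
    rw [pow_succ, Matrix.mul_apply]
    exact Finset.sum_nonneg fun k _ => mul_nonneg (ih i k) (hB0 k j)

lemma inv_one_sub_entries_nonneg {S : Type*} [Fintype S] [DecidableEq S]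
    (B : Matrix S S ℝ) (hB0 : ∀ i j, 0 ≤ B i j)
    (hrow : ∀ i, ∑ j, B i j < 1) :
    ∀ i j, 0 ≤ (1 - B)⁻¹ i j := by
  letI : NormedRing (Matrix S S ℝ) := Matrix.linftyOpNormedRing
  letI : NormedAlgebra ℝ (Matrix S S ℝ) := Matrix.linftyOpNormedAlgebra
  letI : CompleteSpace (Matrix S S ℝ) := FiniteDimensional.complete ℝ _
  have hnorm : ‖B‖ < 1 := by
    rw [Matrix.linfty_opNorm_def]
    rw [show (1 : ℝ) = ((1 : NNReal) : ℝ) by simp, NNReal.coe_lt_coe]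
    refine Finset.sup_lt_iff (by norm_num) |>.mpr fun i _ => ?_
    rw [← NNReal.coe_lt_coe]
    push_cast
    calc (∑ j, (‖B i j‖₊ : ℝ)) = ∑ j, B i j := by
          refine Finset.sum_congr rfl fun j _ => ?_
          simp [Real.nnnorm_of_nonneg (hB0 i j)]
      _ < 1 := hrow i
  have hsum : HasSum (fun n : ℕ => B ^ n) (Ring.inverse (1 - B)) :=
    hasSum_geom_series_inverse B hnorm
  intro i j
  let g : Matrix S S ℝ →ₗ[ℝ] ℝ :=
    { toFun := fun M => M i j, map_add' := fun _ _ => rfl, map_smul' := fun _ _ => rfl }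
  have hgc : Continuous g := g.continuous_of_finiteDimensional
  have h2 : HasSum (fun n : ℕ => (B ^ n) i j) (Ring.inverse (1 - B) i j) :=
    hsum.map g.toAddMonoidHom hgc
  have : 0 ≤ Ring.inverse (1 - B) i j :=
    hasSum_le (fun n => pow_entries_nonneg B hB0 n i j) hasSum_zero h2
  rwa [Matrix.nonsing_inv_eq_ringInverse]

lemma actMat_mul_row_sum {S A : Type*} [Fintype S] [Fintype A] [DecidableEq S]
    (π : S → A → ℝ) (hπ1 : ∀ s, ∑ a, π s a = 1)
    (PD : Matrix (S × A) S ℝ) (hPD1 : ∀ p, ∑ s, PD p s = 1) (i : S) :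
    ∑ j, (actMat π * PD) i j = 1 := by
  simp only [Matrix.mul_apply, actMat, Matrix.of_apply]
  rw [Finset.sum_comm]
  have : ∀ p : S × A, ∑ j, (if p.1 = i then π i p.2 else 0) * PD p j
      = (if p.1 = i then π i p.2 else 0) := by
    intro p
    rw [← Finset.mul_sum, hPD1 p, mul_one]
  rw [Finset.sum_congr rfl fun p _ => this p]
  rw [Fintype.sum_prod_type]
  rw [Finset.sum_eq_single i]
  · simp [hπ1 i]
  · intro b _ hb; simp [hb]
  · simp

lemma noccVec_nonneg {S A : Type*} [Fintype S] [Fintype A] [DecidableEq S]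
    (γ : ℝ) (hγ0 : 0 ≤ γ) (hγ1 : γ < 1)
    (PD : Matrix (S × A) S ℝ) (hPD0 : ∀ p s, 0 ≤ PD p s) (hPD1 : ∀ p, ∑ s, PD p s = 1)
    (ρ : S → ℝ) (hρ0 : ∀ s, 0 ≤ ρ s)
    (π : S → A → ℝ) (hπ0 : ∀ s a, 0 ≤ π s a) (hπ1 : ∀ s, ∑ a, π s a = 1) :
    ∀ s, 0 ≤ noccVec γ PD ρ π s := by
  intro s
  have hinv : ∀ i j, 0 ≤ ((1 - γ • ((actMat π : Matrix S (S × A) ℝ) * PD))⁻¹ : Matrix S S ℝ) i j := by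
    apply inv_one_sub_entries_nonneg
    · intro i j
      simp only [Matrix.smul_apply, smul_eq_mul]
      refine mul_nonneg hγ0 ?_
      rw [Matrix.mul_apply]
      refine Finset.sum_nonneg fun p _ => mul_nonneg ?_ (hPD0 p j)
      simp only [actMat, Matrix.of_apply]
      split <;> simp [hπ0]
    · intro i
      simp only [Matrix.smul_apply, smul_eq_mul]
      rw [← Finset.mul_sum, actMat_mul_row_sum π hπ1 PD hPD1 i, mul_one]
      exact hγ1
  unfold noccVec
  refine mul_nonneg (by linarith) ?_
  simp only [Matrix.vecMul, dotProduct]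
  exact Finset.sum_nonneg fun t _ => mul_nonneg (hρ0 t) (hinv t s)

/-- Theorem 7, f-state-aware large-α clipping. For a monotone increasing
`f` that is nonnegative on nonnegative inputs, if at the minimizer `π̄` of the plain infimum
term there is a state with positive occupancy-weighted divergence where `f(w^π̄(s₀)) < 1`,
then for some clipping level `C > 1` the infimum term with clipped `f`-state-aware penalty
`min(f∘w, C)·Dis` is at most the plain infimum term. -/
theorem clipped_f_state_aware_inf_le {S A : Type*} [Fintype S] [Fintype A]
    [Nonempty S] [Nonempty A] [DecidableEq S]
    (f : ℝ → ℝ) (hfmono : Monotone f) (hf0 : ∀ x : ℝ, 0 ≤ x → 0 ≤ f x)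
    (P PD : Matrix (S × A) S ℝ)
    (hP0 : ∀ p s, 0 ≤ P p s) (hP1 : ∀ p, ∑ s, P p s = 1)
    (hPD0 : ∀ p s, 0 ≤ PD p s) (hPD1 : ∀ p, ∑ s, PD p s = 1)
    (r : S × A → ℝ) (γ : ℝ) (hγ0 : 0 ≤ γ) (hγ1 : γ < 1)
    (ρ : S → ℝ) (hρ0 : ∀ s, 0 ≤ ρ s) (hρ1 : ∑ s, ρ s = 1)
    (Pol : Finset (S → A → ℝ)) (hPolne : Pol.Nonempty)
    (hPol : ∀ π ∈ Pol, (∀ s a, 0 ≤ π s a) ∧ (∀ s, ∑ a, π s a = 1))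
    (πstar : S → A → ℝ) (hπstar0 : ∀ s a, 0 ≤ πstar s a) (hπstar1 : ∀ s, ∑ a, πstar s a = 1)
    (α : ℝ) (hα : 0 < α)
    (dDat : S → ℝ) (hdDat : ∀ s, 0 < dDat s)
    (Dis u : (S → A → ℝ) → S → ℝ)
    (hDis : ∀ π ∈ Pol, ∀ s, 0 ≤ Dis π s)
    (πbar : S → A → ℝ) (hπbar : πbar ∈ Pol)
    (hπbarmin : ∀ π ∈ Pol,
      ∑ s, ρ s * (valVec γ P r πstar s - valVec γ P r πbar s)
          + ∑ s, noccVec γ PD ρ πbar s * (u πbar s + α * Dis πbar s)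
        ≤ ∑ s, ρ s * (valVec γ P r πstar s - valVec γ P r π s)
          + ∑ s, noccVec γ PD ρ π s * (u π s + α * Dis π s))
    (hslack : ∃ s₀, 0 < noccVec γ PD ρ πbar s₀ * Dis πbar s₀ ∧
      f (noccVec γ PD ρ πbar s₀ / dDat s₀) < 1) :
    ∃ C > (1 : ℝ),
      Pol.inf' hPolne (fun π =>
          ∑ s, ρ s * (valVec γ P r πstar s - valVec γ P r π s)
            + ∑ s, noccVec γ PD ρ π s
                * (u π s + α * (min (f (noccVec γ PD ρ π s / dDat s)) C * Dis π s)))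
        ≤ Pol.inf' hPolne (fun π =>
            ∑ s, ρ s * (valVec γ P r πstar s - valVec γ P r π s)
              + ∑ s, noccVec γ PD ρ π s * (u π s + α * Dis π s)) := by
  obtain ⟨hπb0, hπb1⟩ := hPol πbar hπbar
  set n : S → ℝ := noccVec γ PD ρ πbar with hn
  have hn0 : ∀ s, 0 ≤ n s := noccVec_nonneg γ hγ0 hγ1 PD hPD0 hPD1 ρ hρ0 πbar hπb0 hπb1
  obtain ⟨s₀, hpos, hf⟩ := hslack
  set d : S → ℝ := Dis πbar with hd
  have hd0 : ∀ s, 0 ≤ d s := hDis πbar hπbar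
  set w₀ : ℝ := f (n s₀ / dDat s₀) with hw₀
  set δ : ℝ := α * (1 - w₀) * (n s₀ * d s₀) with hδdef
  have hδ : 0 < δ := mul_pos (mul_pos hα (by linarith)) hpos
  set T : ℝ := ∑ s, n s * d s with hT
  have hT0 : 0 < T := by
    have h := Finset.single_le_sum (f := fun s => n s * d s)
      (fun s _ => mul_nonneg (hn0 s) (hd0 s)) (Finset.mem_univ s₀)
    exact hpos.trans_le (hT ▸ h)
  have hCpos : 0 < δ / (α * T) := div_pos hδ (mul_pos hα hT0)
  set C : ℝ := 1 + δ / (α * T) with hC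
  have hC1 : 1 < C := by rw [hC]; linarith
  refine ⟨C, hC1, ?_⟩
  -- key sum inequality at πbar
  set E : ℝ := ∑ s ∈ Finset.univ.erase s₀, n s * d s with hE
  have hE0 : 0 ≤ E :=
    Finset.sum_nonneg fun s _ => mul_nonneg (hn0 s) (hd0 s)
  have hTE : T = n s₀ * d s₀ + E := (Finset.add_sum_erase _ _ (Finset.mem_univ s₀)).symm
  have hET : E ≤ T := by nlinarith [mul_nonneg (hn0 s₀) (hd0 s₀)]
  have hmins₀ : min (f (n s₀ / dDat s₀)) C = w₀ := min_eq_left (by linarith)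
  have keysum : ∑ s, n s * (min (f (n s / dDat s)) C * d s) ≤ T := by
    rw [← Finset.add_sum_erase _ (fun s => n s * (min (f (n s / dDat s)) C * d s))
      (Finset.mem_univ s₀), hmins₀]
    have hub : ∑ s ∈ Finset.univ.erase s₀, n s * (min (f (n s / dDat s)) C * d s)
        ≤ C * E := by
      rw [hE, Finset.mul_sum]
      refine Finset.sum_le_sum fun s _ => ?_
      have : min (f (n s / dDat s)) C * d s ≤ C * d s :=
        mul_le_mul_of_nonneg_right (min_le_right _ _) (hd0 s)
      nlinarith [hn0 s, mul_le_mul_of_nonneg_left this (hn0 s)]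
    have hkey : (C - 1) * E ≤ δ / α := by
      have h1 : C - 1 = δ / (α * T) := by rw [hC]; ring
      rw [h1]
      have h2 : δ / (α * T) * E ≤ δ / (α * T) * T :=
        mul_le_mul_of_nonneg_left hET (le_of_lt hCpos)
      have h3 : δ / (α * T) * T = δ / α := by field_simp
      linarith
    have h4 : δ / α = (1 - w₀) * (n s₀ * d s₀) := by rw [hδdef]; field_simp
    have h6 : (1 - w₀) * (n s₀ * d s₀) = n s₀ * d s₀ - n s₀ * (w₀ * d s₀) := by ring
    have h5 : n s₀ * (w₀ * d s₀) + C * E ≤ T := by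
      clear_value C T E δ w₀
      nlinarith [hkey, h4, h6, hTE]
    linarith [hub]
  have key : ∑ s, n s * (u πbar s + α * (min (f (n s / dDat s)) C * d s))
      ≤ ∑ s, n s * (u πbar s + α * d s) := by
    have e1 : ∀ X : S → ℝ, ∑ s, n s * (u πbar s + α * X s)
        = ∑ s, n s * u πbar s + α * ∑ s, n s * X s := by
      intro X
      rw [Finset.mul_sum, ← Finset.sum_add_distrib]
      exact Finset.sum_congr rfl fun s _ => by ring
    rw [e1 (fun s => min (f (n s / dDat s)) C * d s), e1 d]
    have := mul_le_mul_of_nonneg_left keysum (le_of_lt hα)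
    have hT' : ∑ s, n s * d s = T := hT.symm
    linarith
  calc Pol.inf' hPolne (fun π =>
          ∑ s, ρ s * (valVec γ P r πstar s - valVec γ P r π s)
            + ∑ s, noccVec γ PD ρ π s
                * (u π s + α * (min (f (noccVec γ PD ρ π s / dDat s)) C * Dis π s)))
      ≤ ∑ s, ρ s * (valVec γ P r πstar s - valVec γ P r πbar s)
            + ∑ s, n s * (u πbar s + α * (min (f (n s / dDat s)) C * d s)) :=
        Finset.inf'_le _ hπbar
    _ ≤ ∑ s, ρ s * (valVec γ P r πstar s - valVec γ P r πbar s)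
            + ∑ s, n s * (u πbar s + α * d s) := by linarith
    _ ≤ Pol.inf' hPolne (fun π =>
            ∑ s, ρ s * (valVec γ P r πstar s - valVec γ P r π s)
              + ∑ s, noccVec γ PD ρ π s * (u π s + α * Dis π s)) :=
        Finset.le_inf' hPolne _ hπbarmin
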